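/- Let R = ℂ[[s,t]] be the formal power series ring in two variables over ℂ. Let f₁, f₂, g, h' ∈ R and set h = f₁h'. Assume that the quotient R/(f₁f₂, g, h) is a finite-dimensional ℂ-vector space. Then the sequence 0 → R/(f₂, g, h') → R/(f₁f₂, g, h) → R/(f₁, g) → 0 is exact, where the first map is induced by multiplication by f₁ and the second is the natural projection. -/

import Mathlib

open MvPowerSeries

local notation "R" => MvPowerSeries (Fin 2) ℂ

lemma aux_X_ne_zero (i : Fin 2) : (X i : R) ≠ 0 := by
  intro h
  have h1 : (coeff (Finsupp.single i 1)) (X i : R) = 1 := coeff_index_single_self_X i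
  rw [h, map_zero] at h1
  exact zero_ne_one h1

/-- If `X 1 * u = X 0 * v` then `X 0 ∣ u`. -/
lemma aux_shift (u v : R) (huv : X 1 * u = X 0 * v) : (X 0 : R) ∣ u := by
  rw [X_dvd_iff]
  intro m hm
  have h1 : (coeff (Finsupp.single (1 : Fin 2) 1 + m)) (X 1 * u) = coeff m u := by
    simpa [X_def] using coeff_add_monomial_mul (m := Finsupp.single (1 : Fin 2) 1) (n := m) (φ := u)
      (1 : ℂ)
  have h2 : (coeff (Finsupp.single (1 : Fin 2) 1 + m)) (X 0 * v) = 0 := by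
    refine X_dvd_iff.mp (dvd_mul_right _ _) _ ?_
    simp [hm, Finsupp.single_apply]
  rw [← h1, huv, h2]

/-- Base case: if `g ≠ 0`, `g ∣ X 0 * y` and `g ∣ X 1 * y` then `g ∣ y`. -/
lemma aux_base (g y : R) (hg : g ≠ 0) (h0 : g ∣ X 0 * y) (h1 : g ∣ X 1 * y) : g ∣ y := by
  obtain ⟨u, hu⟩ := h0
  obtain ⟨v, hv⟩ := h1
  have key : X 1 * u = X 0 * v := by
    have h : g * (X 1 * u) = g * (X 0 * v) := by
      calc g * (X 1 * u) = X 1 * (g * u) := by ring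
        _ = X 1 * (X 0 * y) := by rw [← hu]
        _ = X 0 * (X 1 * y) := by ring
        _ = X 0 * (g * v) := by rw [hv]
        _ = g * (X 0 * v) := by ring
    exact mul_left_cancel₀ hg h
  obtain ⟨u', hu'⟩ := aux_shift u v key
  have h : X 0 * y = X 0 * (g * u') := by rw [hu, hu']; ring
  exact ⟨u', mul_left_cancel₀ (aux_X_ne_zero 0) h⟩

lemma aux_Q (g : R) (hg : g ≠ 0) : ∀ (l : ℕ) (y : R), g ∣ X 0 * y → g ∣ X 1 ^ l * y → g ∣ y := by
  intro l
  induction l with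
  | zero => intro y _ h1; simpa using h1
  | succ l ih =>
    intro y h0 h1
    have hu : g ∣ X 1 ^ l * y := by
      refine aux_base g (X 1 ^ l * y) hg ?_ ?_
      · have e : X 0 * (X 1 ^ l * y) = X 1 ^ l * (X 0 * y) := by ring
        rw [e]; exact h0.mul_left _
      · have e : X 1 * (X 1 ^ l * y) = X 1 ^ (l + 1) * y := by ring
        rw [e]; exact h1
    exact ih y h0 hu

/-- If `g ≠ 0`, `g ∣ X 0 ^ k * y` and `g ∣ X 1 ^ l * y` then `g ∣ y`. -/
lemma aux_P (g : R) (hg : g ≠ 0) : ∀ (k l : ℕ) (y : R),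
    g ∣ X 0 ^ k * y → g ∣ X 1 ^ l * y → g ∣ y := by
  intro k
  induction k with
  | zero => intro l y h0 _; simpa using h0
  | succ k ih =>
    intro l y h0 h1
    have hv : g ∣ X 0 ^ k * y := by
      refine aux_Q g hg l (X 0 ^ k * y) ?_ ?_
      · have e : X 0 * (X 0 ^ k * y) = X 0 ^ (k + 1) * y := by ring
        rw [e]; exact h0
      · have e : X 1 ^ l * (X 0 ^ k * y) = X 0 ^ k * (X 1 ^ l * y) := by ring
        rw [e]; exact h1.mul_left _
    exact ih l y hv h1

/-- In a finite-dimensional quotient, some power of each variable lies in the ideal. -/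
lemma aux_pow_mem (I : Ideal R) (hfin : FiniteDimensional ℂ (R ⧸ I)) (i : Fin 2) :
    ∃ k : ℕ, (X i : R) ^ k ∈ I := by
  have hnli : ¬ LinearIndependent ℂ
      (fun n : ℕ => Ideal.Quotient.mkₐ ℂ I ((X i : R) ^ n)) :=
    Module.Finite.not_linearIndependent_of_infinite _
  rw [linearIndependent_iff'] at hnli
  push_neg at hnli
  obtain ⟨s, c, hsum, j₀, hj₀s, hj₀⟩ := hnli
  set T : Finset ℕ := s.filter (fun j => c j ≠ 0) with hT
  have hTne : T.Nonempty := ⟨j₀, Finset.mem_filter.mpr ⟨hj₀s, hj₀⟩⟩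
  set k := T.min' hTne with hk
  have hkT : k ∈ T := T.min'_mem hTne
  have hkle : ∀ j ∈ T, k ≤ j := fun j hj => T.min'_le j hj
  set p : R := ∑ j ∈ T, c j • (X i : R) ^ j with hp
  have hpI : p ∈ I := by
    have e1 : Ideal.Quotient.mkₐ ℂ I (∑ j ∈ s, c j • (X i : R) ^ j)
        = ∑ j ∈ s, c j • Ideal.Quotient.mkₐ ℂ I ((X i : R) ^ j) :=
      (map_sum (Ideal.Quotient.mkₐ ℂ I) (fun j => c j • (X i : R) ^ j) s).trans
        (Finset.sum_congr rfl fun j _ => map_smul _ _ _)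
    have e2 : p = ∑ j ∈ s, c j • (X i : R) ^ j := by
      rw [hp]
      refine Finset.sum_subset (Finset.filter_subset _ _) ?_
      intro j hjs hjT
      have hc : c j = 0 := by by_contra hc; exact hjT (Finset.mem_filter.mpr ⟨hjs, hc⟩)
      simp [hc]
    have hmk : Ideal.Quotient.mkₐ ℂ I p = 0 := by rw [e2, e1, hsum]
    rw [Ideal.Quotient.mkₐ_eq_mk] at hmk
    exact Ideal.Quotient.eq_zero_iff_mem.mp hmk
  set q : R := ∑ j ∈ T, c j • (X i : R) ^ (j - k) with hq
  have hfac : p = (X i : R) ^ k * q := by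
    rw [hp, hq, Finset.mul_sum]
    refine Finset.sum_congr rfl ?_
    intro j hj
    rw [mul_smul_comm, ← pow_add]
    congr 2
    have := hkle j hj
    omega
  have hcq : constantCoeff q = c k := by
    rw [hq, map_sum]
    rw [Finset.sum_eq_single k]
    · simp [smul_eq_C_mul]
    · intro j hj hjk
      have hkj : k < j := lt_of_le_of_ne (hkle j hj) (Ne.symm hjk)
      have : j - k ≠ 0 := by omega
      simp [smul_eq_C_mul, this]
    · intro hkT'
      exact absurd hkT hkT'
  have hck : c k ≠ 0 := (Finset.mem_filter.mp hkT).2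
  have hqu : IsUnit q := isUnit_iff_constantCoeff.mpr (by rw [hcq]; exact hck.isUnit)
  obtain ⟨u, hu⟩ := hqu
  refine ⟨k, ?_⟩
  have : (X i : R) ^ k = p * ↑u⁻¹ := by
    rw [hfac, ← hu, mul_assoc, Units.mul_inv, mul_one]
  rw [this]
  exact I.mul_mem_right _ hpI

lemma aux_mem_span_triple {x a b c : R} (h : x ∈ Ideal.span {a, b, c}) :
    ∃ A B C : R, x = A * a + B * b + C * c := by
  obtain ⟨A, z, hz, rfl⟩ := Ideal.mem_span_insert.mp h
  obtain ⟨B, w, hw, rfl⟩ := Ideal.mem_span_insert.mp hz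
  obtain ⟨C, hC⟩ := Ideal.mem_span_singleton'.mp hw
  exact ⟨A, B, C, by rw [← hC]; ring⟩

/-- Exactness of `0 → R/(f₂,g,h') → R/(f₁f₂,g,h) → R/(f₁,g) → 0` for `R = ℂ[[s,t]]`,
`h = f₁h'`, assuming `R/(f₁f₂,g,h)` is a finite-dimensional ℂ-vector space; the first
map is induced by multiplication by `f₁` and the second is the natural projection. -/
theorem stmt_2 (f₁ f₂ g h h' : MvPowerSeries (Fin 2) ℂ) (hh : h = f₁ * h')
    (hfin : FiniteDimensional ℂ
      (MvPowerSeries (Fin 2) ℂ ⧸ Ideal.span {f₁ * f₂, g, h})) :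
    -- multiplication by `f₁` induces a well-defined map `R/(f₂,g,h') → R/(f₁f₂,g,h)` ...
    (∀ x y : MvPowerSeries (Fin 2) ℂ,
      Ideal.Quotient.mk (Ideal.span {f₂, g, h'}) x =
        Ideal.Quotient.mk (Ideal.span {f₂, g, h'}) y →
      Ideal.Quotient.mk (Ideal.span {f₁ * f₂, g, h}) (f₁ * x) =
        Ideal.Quotient.mk (Ideal.span {f₁ * f₂, g, h}) (f₁ * y)) ∧
    -- ... which is injective
    (∀ x : MvPowerSeries (Fin 2) ℂ,
      Ideal.Quotient.mk (Ideal.span {f₁ * f₂, g, h}) (f₁ * x) = 0 →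
      Ideal.Quotient.mk (Ideal.span {f₂, g, h'}) x = 0) ∧
    -- the natural projection `R/(f₁f₂,g,h) → R/(f₁,g)` is well defined (hence surjective)
    Ideal.span {f₁ * f₂, g, h} ≤ Ideal.span {f₁, g} ∧
    (∀ z : MvPowerSeries (Fin 2) ℂ ⧸ Ideal.span {f₁, g},
      ∃ x : MvPowerSeries (Fin 2) ℂ, Ideal.Quotient.mk (Ideal.span {f₁, g}) x = z) ∧
    -- exactness in the middle
    (∀ x : MvPowerSeries (Fin 2) ℂ,
      Ideal.Quotient.mk (Ideal.span {f₁, g}) x = 0 ↔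
      ∃ y : MvPowerSeries (Fin 2) ℂ,
        Ideal.Quotient.mk (Ideal.span {f₁ * f₂, g, h}) x =
          Ideal.Quotient.mk (Ideal.span {f₁ * f₂, g, h}) (f₁ * y)) := by
  have hmem1 : f₁ * f₂ ∈ Ideal.span {f₁ * f₂, g, h} := Ideal.subset_span (by simp)
  have hmemg : g ∈ Ideal.span {f₁ * f₂, g, h} := Ideal.subset_span (by simp)
  have hmemh : h ∈ Ideal.span {f₁ * f₂, g, h} := Ideal.subset_span (by simp)
  have h3 : Ideal.span {f₁ * f₂, g, h} ≤ Ideal.span {f₁, g} := by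
    rw [Ideal.span_le]
    rintro z hz
    simp only [Set.mem_insert_iff, Set.mem_singleton_iff] at hz
    rcases hz with rfl | rfl | rfl
    · exact Ideal.mul_mem_right _ _ (Ideal.subset_span (by simp))
    · exact Ideal.subset_span (by simp)
    · rw [hh]; exact Ideal.mul_mem_right _ _ (Ideal.subset_span (by simp))
  refine ⟨?_, ?_, h3, fun z => Ideal.Quotient.mk_surjective z, ?_⟩
  · -- well-definedness
    intro x y hxy
    rw [Ideal.Quotient.eq] at hxy ⊢
    obtain ⟨A, B, C, hd⟩ := aux_mem_span_triple hxy
    have he : f₁ * x - f₁ * y = A * (f₁ * f₂) + (B * f₁) * g + C * h := by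
      rw [hh]; linear_combination f₁ * hd
    rw [he]
    exact add_mem (add_mem (Ideal.mul_mem_left _ _ hmem1) (Ideal.mul_mem_left _ _ hmemg))
      (Ideal.mul_mem_left _ _ hmemh)
  · -- injectivity
    intro x hx
    rw [Ideal.Quotient.eq_zero_iff_mem] at hx ⊢
    obtain ⟨a, b, c, hd⟩ := aux_mem_span_triple hx
    rw [hh] at hd
    by_cases hg : g = 0
    · by_cases hf : f₁ = 0
      · exfalso
        obtain ⟨k, hk⟩ := aux_pow_mem _ hfin 0
        obtain ⟨A, B, C, hkd⟩ := aux_mem_span_triple hk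
        rw [hh, hf, hg] at hkd
        have : (X 0 : R) ^ k = 0 := by linear_combination hkd
        exact pow_ne_zero k (aux_X_ne_zero 0) this
      · have hw : f₁ * (x - a * f₂ - c * h') = 0 := by
          rw [hg] at hd; linear_combination hd
        have hw0 : x - a * f₂ - c * h' = 0 := by
          rcases mul_eq_zero.mp hw with h' | h'
          · exact absurd h' hf
          · exact h'
        have hx' : x = a * f₂ + c * h' := by linear_combination hw0
        rw [hx']
        exact add_mem (Ideal.mul_mem_left _ _ (Ideal.subset_span (by simp)))
          (Ideal.mul_mem_left _ _ (Ideal.subset_span (by simp)))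
    · have hw : f₁ * (x - a * f₂ - c * h') = b * g := by linear_combination hd
      obtain ⟨k, hk⟩ := aux_pow_mem _ hfin 0
      obtain ⟨l, hl⟩ := aux_pow_mem _ hfin 1
      obtain ⟨A, B, C, hkd⟩ := aux_mem_span_triple hk
      obtain ⟨A', B', C', hld⟩ := aux_mem_span_triple hl
      rw [hh] at hkd hld
      have h0 : g ∣ (X 0 : R) ^ k * (x - a * f₂ - c * h') := by
        refine ⟨A * f₂ * b + B * (x - a * f₂ - c * h') + C * (h' * b), ?_⟩
        linear_combination (x - a * f₂ - c * h') * hkd + (A * f₂ + C * h') * hw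
      have h1 : g ∣ (X 1 : R) ^ l * (x - a * f₂ - c * h') := by
        refine ⟨A' * f₂ * b + B' * (x - a * f₂ - c * h') + C' * (h' * b), ?_⟩
        linear_combination (x - a * f₂ - c * h') * hld + (A' * f₂ + C' * h') * hw
      obtain ⟨d, hdw⟩ := aux_P g hg k l _ h0 h1
      have hx' : x = a * f₂ + d * g + c * h' := by linear_combination hdw
      rw [hx']
      refine add_mem (add_mem (Ideal.mul_mem_left _ _ (Ideal.subset_span (by simp)))
        (Ideal.mul_mem_left _ _ (Ideal.subset_span (by simp))))
        (Ideal.mul_mem_left _ _ (Ideal.subset_span (by simp)))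
  · -- middle exactness
    intro x
    constructor
    · intro hx
      rw [Ideal.Quotient.eq_zero_iff_mem] at hx
      obtain ⟨u, v, huv⟩ := Ideal.mem_span_pair.mp hx
      refine ⟨u, ?_⟩
      rw [Ideal.Quotient.eq]
      have he : x - f₁ * u = v * g := by linear_combination -huv
      rw [he]
      exact Ideal.mul_mem_left _ _ hmemg
    · rintro ⟨y, hy⟩
      rw [Ideal.Quotient.eq] at hy
      rw [Ideal.Quotient.eq_zero_iff_mem]
      have he : x = (x - f₁ * y) + f₁ * y := by ring
      rw [he]
      exact add_mem (h3 hy) (Ideal.mul_mem_right _ _ (Ideal.subset_span (by simp)))
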